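/- Let G and H be groups and g₁, g₂ ∈ G. Then inl g₁ and inl g₂ are conjugate in the free product G ∗ H if and only if g₁ and g₂ are conjugate in G. (This justifies the paper's indexing in Example 5.1 of the conjugacy classes of G ∗ H of factor type by the conjugacy classes of G.) -/
import Mathlib

open Monoid
open scoped Monoid.Coprod

/-- Two elements of `G` are conjugate in the free product `G ∗ H` iff they are
conjugate in `G`. -/
theorem isConj_inl_iff {G H : Type*} [Group G] [Group H] (g₁ g₂ : G) :
    IsConj (Coprod.inl g₁ : G ∗ H) (Coprod.inl g₂ : G ∗ H) ↔ IsConj g₁ g₂ := by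
  constructor
  · intro h
    have := (Coprod.fst : G ∗ H →* G).map_isConj h
    simpa using this
  · intro h
    exact (Coprod.inl : G →* G ∗ H).map_isConj h
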